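/- With A_τ = e^{Aτ} for the n×n nilpotent superdiagonal matrix A, C = e_1^T, and α_i = C(N,i)(−1)^i, the aggregated row vector satisfies Σ_{i=0}^{N} α_i C A_τ^{N−i} = τ Σ_{m=1}^{n} γ_m^{(N)} e_m^T, where γ_m^{(N)} = (τ^{m−2}/(m−1)!) Σ_{i=0}^{N} C(N,i)(−1)^{N−i} i^{m−1}. In particular, this vector is zero if and only if N ≥ n. -/

import Mathlib

open Finset

/-- The `n × n` nilpotent matrix with ones on the superdiagonal. -/
def superdiag (n : ℕ) : Matrix (Fin n) (Fin n) ℝ :=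
  Matrix.of fun i j => if (i : ℕ) + 1 = (j : ℕ) then 1 else 0

/-- `γ_m^{(N)} = (τ^{m-2}/(m-1)!) ∑_{i=0}^N C(N,i) (-1)^{N-i} i^{m-1}`. -/
noncomputable def gammaCoef (τ : ℝ) (N m : ℕ) : ℝ :=
  τ ^ ((m : ℤ) - 2) / ((m - 1).factorial : ℝ) *
    ∑ i ∈ Finset.range (N + 1), (N.choose i : ℝ) * (-1) ^ (N - i) * (i : ℝ) ^ (m - 1)

lemma superdiag_pow (n m : ℕ) (i j : Fin n) :
    ((superdiag n) ^ m) i j = if (i : ℕ) + m = (j : ℕ) then 1 else 0 := by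
  induction m generalizing j with
  | zero => simp [Matrix.one_apply, Fin.ext_iff]
  | succ m ih =>
    rw [pow_succ, Matrix.mul_apply]
    have h2 : ∀ k : Fin n, superdiag n k j = if (k : ℕ) + 1 = (j : ℕ) then 1 else 0 :=
      fun k => rfl
    simp only [ih, h2, ite_mul, one_mul, zero_mul]
    by_cases h : (i : ℕ) + m < n
    · rw [Finset.sum_eq_single (⟨(i : ℕ) + m, h⟩ : Fin n)]
      · simp [← add_assoc]
      · intro b _ hb
        rw [if_neg]
        intro hc
        exact hb (Fin.ext hc.symm)
      · simp
    · rw [Finset.sum_eq_zero, if_neg]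
      · omega
      · intro k _
        rw [if_neg]
        omega

lemma superdiag_pow_eq_zero (n m : ℕ) (h : n ≤ m) : (superdiag n) ^ m = 0 := by
  ext i j
  rw [superdiag_pow, if_neg, Matrix.zero_apply]
  omega

lemma exp_superdiag (n : ℕ) (s : ℝ) :
    NormedSpace.exp (s • superdiag n) =
      ∑ m ∈ Finset.range n, (s ^ m / (m.factorial : ℝ)) • (superdiag n) ^ m := by
  simp only [NormedSpace.exp_eq_tsum ℝ]
  rw [tsum_eq_sum (s := Finset.range n)
    (fun m hm => by
      rw [smul_pow, superdiag_pow_eq_zero n m (by simpa using hm), smul_zero, smul_zero])]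
  refine Finset.sum_congr rfl fun m _ => ?_
  rw [smul_pow, smul_smul, div_eq_inv_mul]

lemma exp_row (n : ℕ) (hn : 0 < n) (s : ℝ) (j : Fin n) :
    (NormedSpace.exp (s • superdiag n)) ⟨0, hn⟩ j = s ^ (j : ℕ) / ((j : ℕ).factorial : ℝ) := by
  rw [exp_superdiag]
  have : ∀ m ∈ Finset.range n,
      ((s ^ m / (m.factorial : ℝ)) • (superdiag n) ^ m) ⟨0, hn⟩ j
        = if m = (j : ℕ) then s ^ m / (m.factorial : ℝ) else 0 := by
    intro m _
    rw [Matrix.smul_apply, superdiag_pow]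
    simp [eq_comm]
  rw [Matrix.sum_apply, Finset.sum_congr rfl this, Finset.sum_ite_eq' (Finset.range n) ((j : ℕ)), if_pos (Finset.mem_range.2 j.isLt)]

open fwdDiff

lemma T_eq (N j : ℕ) :
    ∑ i ∈ Finset.range (N + 1), (N.choose i : ℝ) * (-1) ^ (N - i) * (i : ℝ) ^ j =
      (fwdDiff (1:ℕ))^[N] (fun x : ℕ => (x : ℝ) ^ j) 0 := by
  rw [fwdDiff_iter_eq_sum_shift]
  refine Finset.sum_congr rfl fun i hi => ?_
  have h0 : (0 + i • 1 : ℕ) = i := by simp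
  rw [h0, zsmul_eq_mul]
  push_cast
  ring

lemma fwdDiff_pow_step (j : ℕ) :
    fwdDiff (1:ℕ) (fun x : ℕ => (x : ℝ) ^ j) =
      ∑ k ∈ Finset.range j, (j.choose k : ℝ) • fun x : ℕ => (x : ℝ) ^ k := by
  funext x
  simp only [fwdDiff, Finset.sum_apply, Pi.smul_apply, smul_eq_mul]
  push_cast
  rw [add_pow]
  rw [Finset.sum_range_succ]
  simp only [one_pow, Nat.choose_self, Nat.cast_one, mul_one]
  rw [add_sub_cancel_right]
  exact Finset.sum_congr rfl fun k _ => by ring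

lemma fwdDiff_pow_zero (j : ℕ) : ∀ N, j < N → (fwdDiff (1:ℕ))^[N] (fun x : ℕ => (x : ℝ) ^ j) = 0 := by
  induction j using Nat.strong_induction_on with
  | _ j ih =>
    intro N hN
    obtain ⟨M, rfl⟩ : ∃ M, N = M + 1 := ⟨N - 1, by omega⟩
    rw [Function.iterate_succ_apply, fwdDiff_pow_step, fwdDiff_iter_finset_sum]
    refine Finset.sum_eq_zero fun k hk => ?_
    rw [fwdDiff_iter_const_smul, ih k (Finset.mem_range.1 hk) M (by
      have := Finset.mem_range.1 hk; omega), smul_zero]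

lemma fwdDiff_pow_pos : ∀ N, 1 ≤ N → ∀ j, N ≤ j →
    0 < (fwdDiff (1:ℕ))^[N] (fun x : ℕ => (x : ℝ) ^ j) 0 := by
  intro N
  induction N using Nat.strong_induction_on with
  | _ N ih =>
    intro hN j hj
    obtain ⟨M, rfl⟩ : ∃ M, N = M + 1 := ⟨N - 1, by omega⟩
    rw [Function.iterate_succ_apply, fwdDiff_pow_step, fwdDiff_iter_finset_sum,
      Finset.sum_apply]
    have hterm : ∀ k, (fwdDiff (1:ℕ))^[M] ((j.choose k : ℝ) • fun x : ℕ => (x : ℝ) ^ k) 0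
        = (j.choose k : ℝ) * (fwdDiff (1:ℕ))^[M] (fun x : ℕ => (x : ℝ) ^ k) 0 := fun k => by
      rw [fwdDiff_iter_const_smul, Pi.smul_apply, smul_eq_mul]
    rcases Nat.eq_zero_or_pos M with hM | hM
    · subst hM
      simp only [hterm, Function.iterate_zero, id_eq]
      rw [Finset.sum_congr rfl (g := fun k => if k = 0 then (1:ℝ) else 0)
          (fun k hk => by
            rcases Nat.eq_zero_or_pos k with rfl | hk0
            · simp
            · simp [zero_pow hk0.ne', hk0.ne']),
        Finset.sum_ite_eq' (Finset.range j) 0, if_pos (Finset.mem_range.2 (by omega))]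
      norm_num
    · apply Finset.sum_pos'
      · intro k hk
        rw [hterm]
        rcases lt_or_ge k M with h | h
        · rw [fwdDiff_pow_zero k M h, Pi.zero_apply, mul_zero]
        · exact le_of_lt (mul_pos
            (by exact_mod_cast Nat.choose_pos (Finset.mem_range.1 hk).le)
            (ih M (by omega) hM k h))
      · refine ⟨j - 1, Finset.mem_range.2 (by omega), ?_⟩
        rw [hterm]
        apply mul_pos
        · have : 0 < j.choose (j - 1) := Nat.choose_pos (by omega)
          exact_mod_cast this
        · exact ih M (by omega) hM (j - 1) (by omega)

theorem stmt_14 (n N : ℕ) (hn : 0 < n) (hN : 1 ≤ N) (τ : ℝ) (hτ : τ ≠ 0) :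
    ((∑ i ∈ Finset.range (N + 1),
        ((N.choose i : ℝ) * (-1) ^ i) •
          (NormedSpace.exp (τ • superdiag n)) ^ (N - i)) ⟨0, hn⟩ =
      τ • ∑ m : Fin n, gammaCoef τ N ((m : ℕ) + 1) • (Pi.single m (1 : ℝ) : Fin n → ℝ)) ∧
    ((∑ i ∈ Finset.range (N + 1),
        ((N.choose i : ℝ) * (-1) ^ i) •
          (NormedSpace.exp (τ • superdiag n)) ^ (N - i)) ⟨0, hn⟩ = 0 ↔ n ≤ N) := by
  have hpow : ∀ k : ℕ, (NormedSpace.exp (τ • superdiag n)) ^ k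
      = NormedSpace.exp (((k : ℝ) * τ) • superdiag n) := by
    intro k
    rw [← Matrix.exp_nsmul, ← Nat.cast_smul_eq_nsmul ℝ, smul_smul]
  have key : ∀ x : Fin n,
      (∑ i ∈ Finset.range (N + 1), ((N.choose i : ℝ) * (-1) ^ i) •
        (NormedSpace.exp (τ • superdiag n)) ^ (N - i)) ⟨0, hn⟩ x
      = τ ^ (x : ℕ) / (((x : ℕ)).factorial : ℝ) *
          ∑ i ∈ Finset.range (N + 1),
            (N.choose i : ℝ) * (-1) ^ (N - i) * (i : ℝ) ^ (x : ℕ) := by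
    intro x
    rw [Matrix.sum_apply]
    have hterm : ∀ i ∈ Finset.range (N + 1),
        (((N.choose i : ℝ) * (-1) ^ i) •
          (NormedSpace.exp (τ • superdiag n)) ^ (N - i)) ⟨0, hn⟩ x
        = ((N.choose i : ℝ) * (-1) ^ i) *
            ((((N - i : ℕ) : ℝ) * τ) ^ (x : ℕ) / (((x : ℕ)).factorial : ℝ)) := by
      intro i _
      rw [hpow, Matrix.smul_apply, exp_row, smul_eq_mul]
    rw [Finset.sum_congr rfl hterm, Finset.mul_sum]
    rw [← Finset.sum_range_reflect]
    refine Finset.sum_congr rfl fun i hi => ?_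
    have hi' : i ≤ N := by have := Finset.mem_range.1 hi; omega
    simp only [Nat.add_sub_cancel]
    rw [Nat.choose_symm hi', show N - (N - i) = i from by omega]
    push_cast [mul_pow]
    ring
  constructor
  · funext x
    rw [key x, Pi.smul_apply, Finset.sum_apply, smul_eq_mul]
    have hterm : ∀ m ∈ (Finset.univ : Finset (Fin n)),
        (gammaCoef τ N ((m : ℕ) + 1) • (Pi.single m (1 : ℝ) : Fin n → ℝ)) x
        = if x = m then gammaCoef τ N ((m : ℕ) + 1) else 0 := by
      intro m _
      rw [Pi.smul_apply, Pi.single_apply, smul_eq_mul]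
      by_cases h : x = m <;> simp [h]
    rw [Finset.sum_congr rfl hterm, Finset.sum_ite_eq, if_pos (Finset.mem_univ x)]
    rw [gammaCoef]
    have h1 : ((x : ℕ) + 1) - 1 = (x : ℕ) := rfl
    have h2 : (((x : ℕ) + 1 : ℕ) : ℤ) - 2 = ((x : ℕ) : ℤ) - 1 := by push_cast; ring
    rw [h1, h2, zpow_sub₀ hτ, zpow_one, zpow_natCast]
    field_simp
  · constructor
    · intro h0
      by_contra hc
      push_neg at hc
      have hx := congr_fun h0 ⟨n - 1, by omega⟩
      rw [key, Pi.zero_apply] at hx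
      have hfa : (((n - 1 : ℕ)).factorial : ℝ) ≠ 0 := Nat.cast_ne_zero.2 (Nat.factorial_ne_zero _)
      have hT : ∑ i ∈ Finset.range (N + 1),
          (N.choose i : ℝ) * (-1) ^ (N - i) * (i : ℝ) ^ (n - 1 : ℕ) = 0 := by
        rcases mul_eq_zero.1 hx with h | h
        · exact absurd h (by positivity)
        · exact h
      rw [T_eq] at hT
      exact absurd hT (fwdDiff_pow_pos N hN (n - 1) (by omega)).ne'
    · intro h
      funext x
      rw [key x, T_eq, fwdDiff_pow_zero (x : ℕ) N (lt_of_lt_of_le x.isLt h),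
        Pi.zero_apply, mul_zero, Pi.zero_apply]
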